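/- The matrix N_k is a permutation matrix: N_k((p,l),(p',l')) = 1 if (p',l') = (k−p−l, p), and N_k((p,l),(p',l')) = 0 otherwise. Moreover the map σ : V_k → V_k, σ(p,l) = (k−p−l, p), is a bijection with σ∘σ∘σ = id and σ ≠ id (so σ has order 3), and σ is an automorphism of the graph 𝒜⁽ⁿ⁾: Δ(σ(v),σ(w)) = Δ(v,w) for all v,w ∈ V_k. (This identifies the permutation P of the Hilbert series theorem for 𝒜⁽ⁿ⁾ as the ℤ₃ rotational symmetry of the graph.) -/

import Mathlib

open scoped Matrix

/-- Vertices of the SU(3) graph `𝒜⁽ⁿ⁾` (with `n = k + 3`): pairs `(p, l)` of naturals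
with `p + l ≤ k`, encoded inside `Fin (k+1) × Fin (k+1)`. -/
abbrev GraphAVertex (k : ℕ) : Type :=
  {v : Fin (k + 1) × Fin (k + 1) // (v.1 : ℕ) + (v.2 : ℕ) ≤ k}

/-- Adjacency matrix `Δ` of the graph `𝒜⁽ⁿ⁾`: there is an edge `(p,l) → (p',l')` iff
`(p',l')` is `(p+1,l)`, `(p−1,l+1)` (requiring `p ≥ 1`) or `(p,l−1)` (requiring `l ≥ 1`). -/
def graphAAdj (k : ℕ) : Matrix (GraphAVertex k) (GraphAVertex k) ℤ := fun v w =>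
  if ((w.1.1 : ℕ) = (v.1.1 : ℕ) + 1 ∧ (w.1.2 : ℕ) = (v.1.2 : ℕ))
      ∨ (1 ≤ (v.1.1 : ℕ) ∧ (w.1.1 : ℕ) + 1 = (v.1.1 : ℕ) ∧ (w.1.2 : ℕ) = (v.1.2 : ℕ) + 1)
      ∨ (1 ≤ (v.1.2 : ℕ) ∧ (w.1.1 : ℕ) = (v.1.1 : ℕ) ∧ (w.1.2 : ℕ) + 1 = (v.1.2 : ℕ))
  then 1 else 0

/-- The recursively defined fusion (nimrep) matrices `N_j` of the graph `𝒜⁽ⁿ⁾`: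
`N₀ = 1`, `N₁ = Δ`, `N₂ = Δ·Δ − Δᵀ`, `N_{j+3} = Δ·N_{j+2} − Δᵀ·N_{j+1} + N_j`. -/
def graphAFusion (k : ℕ) : ℕ → Matrix (GraphAVertex k) (GraphAVertex k) ℤ
  | 0 => 1
  | 1 => graphAAdj k
  | 2 => graphAAdj k * graphAAdj k - (graphAAdj k)ᵀ
  | j + 3 =>
      graphAAdj k * graphAFusion k (j + 2) - (graphAAdj k)ᵀ * graphAFusion k (j + 1)
        + graphAFusion k j

/-- The `ℤ₃` symmetry `σ(p,l) = (k − p − l, p)` of the graph `𝒜⁽ⁿ⁾`. -/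
def graphASigma (k : ℕ) (v : GraphAVertex k) : GraphAVertex k :=
  ⟨(⟨k - (v.1.1 : ℕ) - (v.1.2 : ℕ), by omega⟩,
    ⟨(v.1.1 : ℕ), by have h := v.2; omega⟩),
    by
      have h := v.2
      show k - (v.1.1 : ℕ) - (v.1.2 : ℕ) + (v.1.1 : ℕ) ≤ k
      omega⟩


/-- Box indicator. -/
def Bz (p l j a b : ℤ) : ℤ :=
  if 0 ≤ a ∧ a ≤ p ∧ 0 ≤ b ∧ b ≤ l ∧ a + b ≤ j then 1 else 0

/-- Single Weyl-term. -/
noncomputable def Sz (j p l q m : ℤ) : ℤ :=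
  if 3 ∣ (p + j + m - l - q) then
    Bz p l j ((p + j + m - l - q) / 3) ((p + j + 2*l - q - 2*m) / 3) else 0

/-- Fusion-coefficient formula (Kac–Walton alternating sum). -/
noncomputable def Fz (k j p l q m : ℤ) : ℤ :=
  Sz j p l q m - Sz j p l (k+1-m) (k+1-q) + Sz j p l (k+m+3) (k-q-m)
    + Sz j p l (k-q-m) (k+q+3)

lemma Sz_eq (j p l q m a b : ℤ) (ha : p + j + m - l - q = 3*a)
    (hb : p + j + 2*l - q - 2*m = 3*b) : Sz j p l q m = Bz p l j a b := by
  unfold Sz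
  split_ifs with h
  · congr 1 <;> omega
  · exact absurd ⟨a, ha⟩ h

lemma Sz_zero (j p l q m : ℤ) (h : ¬ 3 ∣ (p + j + m - l - q)) : Sz j p l q m = 0 :=
  if_neg h

lemma Fz_zero (k j p l q m : ℤ) (h : ¬ 3 ∣ (p + j + m - l - q)) : Fz k j p l q m = 0 := by
  unfold Fz
  rw [Sz_zero _ _ _ _ _ h, Sz_zero _ _ _ _ _ (by omega), Sz_zero _ _ _ _ _ (by omega),
    Sz_zero _ _ _ _ _ (by omega)]
  ring

lemma Fz_eq_boxes (k j p l q m a b1 b2 a3 a4 b4 : ℤ)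
    (ha : p + j + m - l - q = 3*a) (hb1 : b1 = a + l - m) (hb2 : b2 = a + l + q - k - 1)
    (ha3 : a3 = a - m - 1) (ha4 : a4 = a + q + 1) (hb4 : b4 = a + l - k - 2) :
    Fz k j p l q m = Bz p l j a b1 - Bz p l j a b2 + Bz p l j a3 b2 + Bz p l j a4 b4 := by
  unfold Fz
  rw [Sz_eq j p l q m a b1 (by omega) (by omega),
    Sz_eq j p l (k+1-m) (k+1-q) a b2 (by omega) (by omega),
    Sz_eq j p l (k+m+3) (k-q-m) a3 b2 (by omega) (by omega),
    Sz_eq j p l (k-q-m) (k+q+3) a4 b4 (by omega) (by omega)]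

set_option maxHeartbeats 2000000 in
lemma Ebox (p l j a b : ℤ) (hp : 0 ≤ p) (hl : 0 ≤ l) (hj : -2 ≤ j) :
    Bz p l (j+3) (a+1) (b+1) = Bz (p+1) l (j+2) (a+1) (b+1) + Bz (p-1) (l+1) (j+2) a (b+1)
      + Bz p (l-1) (j+2) (a+1) b - Bz (p-1) l (j+1) a b - Bz (p+1) (l-1) (j+1) (a+1) b
      - Bz p (l+1) (j+1) a (b+1) + Bz p l j a b := by
  unfold Bz
  split_ifs <;> omega

set_option maxHeartbeats 4000000 in
lemma Cbox (k j p l q m a b1 b2 a3 a4 b4 : ℤ)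
    (hp : 0 ≤ p) (hl : 0 ≤ l) (hq : 0 ≤ q) (hm : 0 ≤ m)
    (hpl : p + l = k) (hqm : q + m ≤ k) (hj : -1 ≤ j) (hjk : j + 3 ≤ k)
    (ha : p + j + m - l - q = 3*a) (hb1 : b1 = a + l - m) (hb2 : b2 = a + l + q - k - 1)
    (ha3 : a3 = a - m - 1) (ha4 : a4 = a + q + 1) (hb4 : b4 = a + l - k - 2) :
    Bz (p+1) l (j+2) (a+1) (b1+1) - Bz (p+1) l (j+2) (a+1) (b2+1)
      + Bz (p+1) l (j+2) (a3+1) (b2+1) + Bz (p+1) l (j+2) (a4+1) (b4+1)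
    = Bz p (l+1) (j+1) a (b1+1) - Bz p (l+1) (j+1) a (b2+1)
      + Bz p (l+1) (j+1) a3 (b2+1) + Bz p (l+1) (j+1) a4 (b4+1) := by
  unfold Bz
  split_ifs <;> omega

lemma Bz_neg_p (p l j a b : ℤ) (h : p < 0) : Bz p l j a b = 0 := by
  unfold Bz; rw [if_neg]; omega

lemma Bz_neg_l (p l j a b : ℤ) (h : l < 0) : Bz p l j a b = 0 := by
  unfold Bz; rw [if_neg]; omega

set_option maxHeartbeats 2000000 in
lemma Pstepz (k j p l q m : ℤ) (hp : 0 ≤ p) (hl : 0 ≤ l) (hq : 0 ≤ q) (hm : 0 ≤ m)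
    (hpl : p + l ≤ k) (hqm : q + m ≤ k) (hj : -1 ≤ j) (hjk : j + 3 ≤ k) :
    Fz k (j+3) p l q m
      = (if p + l + 1 ≤ k then Fz k (j+2) (p+1) l q m else 0)
        + (if 1 ≤ p then Fz k (j+2) (p-1) (l+1) q m else 0)
        + (if 1 ≤ l then Fz k (j+2) p (l-1) q m else 0)
        - (if 1 ≤ p then Fz k (j+1) (p-1) l q m else 0)
        - (if 1 ≤ l then Fz k (j+1) (p+1) (l-1) q m else 0)
        - (if p + l + 1 ≤ k then Fz k (j+1) p (l+1) q m else 0)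
        + Fz k j p l q m := by
  by_cases h3 : (3:ℤ) ∣ (p + j + m - l - q)
  · obtain ⟨a, ha⟩ := h3
    rw [Fz_eq_boxes k (j+3) p l q m (a+1) (a+l-m+1) (a+l+q-k-1+1) (a-m-1+1) (a+q+1+1)
        (a+l-k-2+1) (by omega) (by omega) (by omega) (by omega) (by omega) (by omega),
      Fz_eq_boxes k (j+2) (p+1) l q m (a+1) (a+l-m+1) (a+l+q-k-1+1) (a-m-1+1) (a+q+1+1)
        (a+l-k-2+1) (by omega) (by omega) (by omega) (by omega) (by omega) (by omega),
      Fz_eq_boxes k (j+2) (p-1) (l+1) q m a (a+l-m+1) (a+l+q-k-1+1) (a-m-1) (a+q+1)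
        (a+l-k-2+1) (by omega) (by omega) (by omega) (by omega) (by omega) (by omega),
      Fz_eq_boxes k (j+2) p (l-1) q m (a+1) (a+l-m) (a+l+q-k-1) (a-m-1+1) (a+q+1+1)
        (a+l-k-2) (by omega) (by omega) (by omega) (by omega) (by omega) (by omega),
      Fz_eq_boxes k (j+1) (p-1) l q m a (a+l-m) (a+l+q-k-1) (a-m-1) (a+q+1)
        (a+l-k-2) (by omega) (by omega) (by omega) (by omega) (by omega) (by omega),
      Fz_eq_boxes k (j+1) (p+1) (l-1) q m (a+1) (a+l-m) (a+l+q-k-1) (a-m-1+1) (a+q+1+1)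
        (a+l-k-2) (by omega) (by omega) (by omega) (by omega) (by omega) (by omega),
      Fz_eq_boxes k (j+1) p (l+1) q m a (a+l-m+1) (a+l+q-k-1+1) (a-m-1) (a+q+1)
        (a+l-k-2+1) (by omega) (by omega) (by omega) (by omega) (by omega) (by omega),
      Fz_eq_boxes k j p l q m a (a+l-m) (a+l+q-k-1) (a-m-1) (a+q+1)
        (a+l-k-2) (by omega) (by omega) (by omega) (by omega) (by omega) (by omega)]
    have E1 := Ebox p l j a (a+l-m) hp hl (by omega)
    have E2 := Ebox p l j a (a+l+q-k-1) hp hl (by omega)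
    have E3 := Ebox p l j (a-m-1) (a+l+q-k-1) hp hl (by omega)
    have E4 := Ebox p l j (a+q+1) (a+l-k-2) hp hl (by omega)
    by_cases h1 : (p + l + 1 ≤ k) <;> by_cases h2 : ((1:ℤ) ≤ p) <;> by_cases hl1 : ((1:ℤ) ≤ l)
    · simp only [if_pos h1, if_pos h2, if_pos hl1]
      linarith [E1, E2, E3, E4]
    · simp only [if_pos h1, if_pos h2, if_neg hl1]
      have z1 := Bz_neg_l p (l-1) (j+2) (a+1) (a+l-m) (by omega)
      have z2 := Bz_neg_l p (l-1) (j+2) (a+1) (a+l+q-k-1) (by omega)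
      have z3 := Bz_neg_l p (l-1) (j+2) (a-m-1+1) (a+l+q-k-1) (by omega)
      have z4 := Bz_neg_l p (l-1) (j+2) (a+q+1+1) (a+l-k-2) (by omega)
      have z5 := Bz_neg_l (p+1) (l-1) (j+1) (a+1) (a+l-m) (by omega)
      have z6 := Bz_neg_l (p+1) (l-1) (j+1) (a+1) (a+l+q-k-1) (by omega)
      have z7 := Bz_neg_l (p+1) (l-1) (j+1) (a-m-1+1) (a+l+q-k-1) (by omega)
      have z8 := Bz_neg_l (p+1) (l-1) (j+1) (a+q+1+1) (a+l-k-2) (by omega)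
      linarith [E1, E2, E3, E4, z1, z2, z3, z4, z5, z6, z7, z8]
    · simp only [if_pos h1, if_neg h2, if_pos hl1]
      have y1 := Bz_neg_p (p-1) (l+1) (j+2) a (a+l-m+1) (by omega)
      have y2 := Bz_neg_p (p-1) (l+1) (j+2) a (a+l+q-k-1+1) (by omega)
      have y3 := Bz_neg_p (p-1) (l+1) (j+2) (a-m-1) (a+l+q-k-1+1) (by omega)
      have y4 := Bz_neg_p (p-1) (l+1) (j+2) (a+q+1) (a+l-k-2+1) (by omega)
      have y5 := Bz_neg_p (p-1) l (j+1) a (a+l-m) (by omega)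
      have y6 := Bz_neg_p (p-1) l (j+1) a (a+l+q-k-1) (by omega)
      have y7 := Bz_neg_p (p-1) l (j+1) (a-m-1) (a+l+q-k-1) (by omega)
      have y8 := Bz_neg_p (p-1) l (j+1) (a+q+1) (a+l-k-2) (by omega)
      linarith [E1, E2, E3, E4, y1, y2, y3, y4, y5, y6, y7, y8]
    · simp only [if_pos h1, if_neg h2, if_neg hl1]
      have y1 := Bz_neg_p (p-1) (l+1) (j+2) a (a+l-m+1) (by omega)
      have y2 := Bz_neg_p (p-1) (l+1) (j+2) a (a+l+q-k-1+1) (by omega)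
      have y3 := Bz_neg_p (p-1) (l+1) (j+2) (a-m-1) (a+l+q-k-1+1) (by omega)
      have y4 := Bz_neg_p (p-1) (l+1) (j+2) (a+q+1) (a+l-k-2+1) (by omega)
      have y5 := Bz_neg_p (p-1) l (j+1) a (a+l-m) (by omega)
      have y6 := Bz_neg_p (p-1) l (j+1) a (a+l+q-k-1) (by omega)
      have y7 := Bz_neg_p (p-1) l (j+1) (a-m-1) (a+l+q-k-1) (by omega)
      have y8 := Bz_neg_p (p-1) l (j+1) (a+q+1) (a+l-k-2) (by omega)
      have z1 := Bz_neg_l p (l-1) (j+2) (a+1) (a+l-m) (by omega)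
      have z2 := Bz_neg_l p (l-1) (j+2) (a+1) (a+l+q-k-1) (by omega)
      have z3 := Bz_neg_l p (l-1) (j+2) (a-m-1+1) (a+l+q-k-1) (by omega)
      have z4 := Bz_neg_l p (l-1) (j+2) (a+q+1+1) (a+l-k-2) (by omega)
      have z5 := Bz_neg_l (p+1) (l-1) (j+1) (a+1) (a+l-m) (by omega)
      have z6 := Bz_neg_l (p+1) (l-1) (j+1) (a+1) (a+l+q-k-1) (by omega)
      have z7 := Bz_neg_l (p+1) (l-1) (j+1) (a-m-1+1) (a+l+q-k-1) (by omega)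
      have z8 := Bz_neg_l (p+1) (l-1) (j+1) (a+q+1+1) (a+l-k-2) (by omega)
      linarith [E1, E2, E3, E4, y1, y2, y3, y4, y5, y6, y7, y8, z1, z2, z3, z4, z5, z6, z7, z8]
    · simp only [if_neg h1, if_pos h2, if_pos hl1]
      have hplk : p + l = k := by omega
      have C := Cbox k j p l q m a (a+l-m) (a+l+q-k-1) (a-m-1) (a+q+1) (a+l-k-2)
        hp hl hq hm hplk hqm hj hjk ha rfl rfl rfl rfl rfl
      linarith [E1, E2, E3, E4, C]
    · simp only [if_neg h1, if_pos h2, if_neg hl1]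
      have hplk : p + l = k := by omega
      have C := Cbox k j p l q m a (a+l-m) (a+l+q-k-1) (a-m-1) (a+q+1) (a+l-k-2)
        hp hl hq hm hplk hqm hj hjk ha rfl rfl rfl rfl rfl
      have z1 := Bz_neg_l p (l-1) (j+2) (a+1) (a+l-m) (by omega)
      have z2 := Bz_neg_l p (l-1) (j+2) (a+1) (a+l+q-k-1) (by omega)
      have z3 := Bz_neg_l p (l-1) (j+2) (a-m-1+1) (a+l+q-k-1) (by omega)
      have z4 := Bz_neg_l p (l-1) (j+2) (a+q+1+1) (a+l-k-2) (by omega)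
      have z5 := Bz_neg_l (p+1) (l-1) (j+1) (a+1) (a+l-m) (by omega)
      have z6 := Bz_neg_l (p+1) (l-1) (j+1) (a+1) (a+l+q-k-1) (by omega)
      have z7 := Bz_neg_l (p+1) (l-1) (j+1) (a-m-1+1) (a+l+q-k-1) (by omega)
      have z8 := Bz_neg_l (p+1) (l-1) (j+1) (a+q+1+1) (a+l-k-2) (by omega)
      linarith [E1, E2, E3, E4, C, z1, z2, z3, z4, z5, z6, z7, z8]
    · simp only [if_neg h1, if_neg h2, if_pos hl1]
      have hplk : p + l = k := by omega
      have C := Cbox k j p l q m a (a+l-m) (a+l+q-k-1) (a-m-1) (a+q+1) (a+l-k-2)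
        hp hl hq hm hplk hqm hj hjk ha rfl rfl rfl rfl rfl
      have y1 := Bz_neg_p (p-1) (l+1) (j+2) a (a+l-m+1) (by omega)
      have y2 := Bz_neg_p (p-1) (l+1) (j+2) a (a+l+q-k-1+1) (by omega)
      have y3 := Bz_neg_p (p-1) (l+1) (j+2) (a-m-1) (a+l+q-k-1+1) (by omega)
      have y4 := Bz_neg_p (p-1) (l+1) (j+2) (a+q+1) (a+l-k-2+1) (by omega)
      have y5 := Bz_neg_p (p-1) l (j+1) a (a+l-m) (by omega)
      have y6 := Bz_neg_p (p-1) l (j+1) a (a+l+q-k-1) (by omega)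
      have y7 := Bz_neg_p (p-1) l (j+1) (a-m-1) (a+l+q-k-1) (by omega)
      have y8 := Bz_neg_p (p-1) l (j+1) (a+q+1) (a+l-k-2) (by omega)
      linarith [E1, E2, E3, E4, C, y1, y2, y3, y4, y5, y6, y7, y8]
    · simp only [if_neg h1, if_neg h2, if_neg hl1]
      have hplk : p + l = k := by omega
      have C := Cbox k j p l q m a (a+l-m) (a+l+q-k-1) (a-m-1) (a+q+1) (a+l-k-2)
        hp hl hq hm hplk hqm hj hjk ha rfl rfl rfl rfl rfl
      have y1 := Bz_neg_p (p-1) (l+1) (j+2) a (a+l-m+1) (by omega)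
      have y2 := Bz_neg_p (p-1) (l+1) (j+2) a (a+l+q-k-1+1) (by omega)
      have y3 := Bz_neg_p (p-1) (l+1) (j+2) (a-m-1) (a+l+q-k-1+1) (by omega)
      have y4 := Bz_neg_p (p-1) (l+1) (j+2) (a+q+1) (a+l-k-2+1) (by omega)
      have y5 := Bz_neg_p (p-1) l (j+1) a (a+l-m) (by omega)
      have y6 := Bz_neg_p (p-1) l (j+1) a (a+l+q-k-1) (by omega)
      have y7 := Bz_neg_p (p-1) l (j+1) (a-m-1) (a+l+q-k-1) (by omega)
      have y8 := Bz_neg_p (p-1) l (j+1) (a+q+1) (a+l-k-2) (by omega)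
      have z1 := Bz_neg_l p (l-1) (j+2) (a+1) (a+l-m) (by omega)
      have z2 := Bz_neg_l p (l-1) (j+2) (a+1) (a+l+q-k-1) (by omega)
      have z3 := Bz_neg_l p (l-1) (j+2) (a-m-1+1) (a+l+q-k-1) (by omega)
      have z4 := Bz_neg_l p (l-1) (j+2) (a+q+1+1) (a+l-k-2) (by omega)
      have z5 := Bz_neg_l (p+1) (l-1) (j+1) (a+1) (a+l-m) (by omega)
      have z6 := Bz_neg_l (p+1) (l-1) (j+1) (a+1) (a+l+q-k-1) (by omega)
      have z7 := Bz_neg_l (p+1) (l-1) (j+1) (a-m-1+1) (a+l+q-k-1) (by omega)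
      have z8 := Bz_neg_l (p+1) (l-1) (j+1) (a+q+1+1) (a+l-k-2) (by omega)
      linarith [E1, E2, E3, E4, C, y1, y2, y3, y4, y5, y6, y7, y8, z1, z2, z3, z4, z5, z6, z7, z8]
  · rw [Fz_zero k (j+3) p l q m (by omega), Fz_zero k (j+2) (p+1) l q m (by omega),
      Fz_zero k (j+2) (p-1) (l+1) q m (by omega), Fz_zero k (j+2) p (l-1) q m (by omega),
      Fz_zero k (j+1) (p-1) l q m (by omega), Fz_zero k (j+1) (p+1) (l-1) q m (by omega),
      Fz_zero k (j+1) p (l+1) q m (by omega), Fz_zero k j p l q m (by omega)]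
    simp

lemma P0z (k p l q m : ℤ) (hp : 0 ≤ p) (hl : 0 ≤ l) (hq : 0 ≤ q) (hm : 0 ≤ m)
    (hpl : p + l ≤ k) (hqm : q + m ≤ k) :
    Fz k 0 p l q m = if q = p ∧ m = l then 1 else 0 := by
  by_cases h3 : (3:ℤ) ∣ (p + 0 + m - l - q)
  · obtain ⟨a, ha⟩ := h3
    rw [Fz_eq_boxes k 0 p l q m a (a+l-m) (a+l+q-k-1) (a-m-1) (a+q+1) (a+l-k-2)
      ha rfl rfl rfl rfl rfl]
    unfold Bz
    split_ifs <;> omega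
  · rw [Fz_zero k 0 p l q m h3, if_neg]
    omega

lemma P1z (k p l q m : ℤ) (hp : 0 ≤ p) (hl : 0 ≤ l) (hq : 0 ≤ q) (hm : 0 ≤ m)
    (hpl : p + l ≤ k) (hqm : q + m ≤ k) :
    Fz k 1 p l q m = if (q = p + 1 ∧ m = l) ∨ (1 ≤ p ∧ q + 1 = p ∧ m = l + 1)
      ∨ (1 ≤ l ∧ q = p ∧ m + 1 = l) then 1 else 0 := by
  by_cases h3 : (3:ℤ) ∣ (p + 1 + m - l - q)
  · obtain ⟨a, ha⟩ := h3
    rw [Fz_eq_boxes k 1 p l q m a (a+l-m) (a+l+q-k-1) (a-m-1) (a+q+1) (a+l-k-2)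
      ha rfl rfl rfl rfl rfl]
    unfold Bz
    split_ifs <;> omega
  · rw [Fz_zero k 1 p l q m h3, if_neg]
    omega

lemma Ptopz (k p l q m : ℤ) (hp : 0 ≤ p) (hl : 0 ≤ l) (hq : 0 ≤ q) (hm : 0 ≤ m)
    (hpl : p + l ≤ k) (hqm : q + m ≤ k) :
    Fz k k p l q m = if q + p + l = k ∧ m = p then 1 else 0 := by
  by_cases h3 : (3:ℤ) ∣ (p + k + m - l - q)
  · obtain ⟨a, ha⟩ := h3
    rw [Fz_eq_boxes k k p l q m a (a+l-m) (a+l+q-k-1) (a-m-1) (a+q+1) (a+l-k-2)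
      ha rfl rfl rfl rfl rfl]
    unfold Bz
    split_ifs <;> omega
  · rw [Fz_zero k k p l q m h3, if_neg]
    omega

lemma Bz_jneg (p l j a b : ℤ) (h : j < 0) : Bz p l j a b = 0 := by
  unfold Bz; rw [if_neg]; omega

lemma Sz_jneg (j p l q m : ℤ) (h : j < 0) : Sz j p l q m = 0 := by
  unfold Sz; split_ifs with hd
  · exact Bz_jneg _ _ _ _ _ h
  · rfl

lemma Fz_jneg (k j p l q m : ℤ) (h : j < 0) : Fz k j p l q m = 0 := by
  unfold Fz
  rw [Sz_jneg _ _ _ _ _ h, Sz_jneg _ _ _ _ _ h, Sz_jneg _ _ _ _ _ h, Sz_jneg _ _ _ _ _ h]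
  ring
lemma sum_pt (k a b : ℕ) (hab : a + b ≤ k) (c : ℤ) :
    (∑ u : GraphAVertex k, if (u.1.1 : ℕ) = a ∧ (u.1.2 : ℕ) = b then c else 0) = c := by
  classical
  have ha : a < k + 1 := by omega
  have hb : b < k + 1 := by omega
  set u0 : GraphAVertex k := ⟨(⟨a, ha⟩, ⟨b, hb⟩), by simpa using hab⟩ with hu0
  have key : ∀ u : GraphAVertex k, ((u.1.1 : ℕ) = a ∧ (u.1.2 : ℕ) = b) ↔ u = u0 := by
    intro u
    constructor
    · rintro ⟨h1, h2⟩
      exact Subtype.ext (Prod.ext (Fin.ext h1) (Fin.ext h2))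
    · rintro rfl
      exact ⟨rfl, rfl⟩
  simp_rw [key]
  rw [Finset.sum_ite_eq' Finset.univ u0 (fun _ => c), if_pos (Finset.mem_univ u0)]

lemma sum_pt_zero (k a b : ℕ) (hab : ¬ (a + b ≤ k)) (c : ℤ) :
    (∑ u : GraphAVertex k, if (u.1.1 : ℕ) = a ∧ (u.1.2 : ℕ) = b then c else 0) = 0 := by
  apply Finset.sum_eq_zero
  intro u _
  rw [if_neg]
  rintro ⟨h1, h2⟩
  exact hab (h1 ▸ h2 ▸ u.2)

set_option maxHeartbeats 1000000 in
lemma adj_sum (k : ℕ) (v : GraphAVertex k) (G : ℕ → ℕ → ℤ) :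
    (∑ u : GraphAVertex k, graphAAdj k v u * G (u.1.1 : ℕ) (u.1.2 : ℕ))
      = (if (v.1.1 : ℕ) + (v.1.2 : ℕ) + 1 ≤ k then G ((v.1.1 : ℕ) + 1) (v.1.2 : ℕ) else 0)
        + (if 1 ≤ (v.1.1 : ℕ) then G ((v.1.1 : ℕ) - 1) ((v.1.2 : ℕ) + 1) else 0)
        + (if 1 ≤ (v.1.2 : ℕ) then G (v.1.1 : ℕ) ((v.1.2 : ℕ) - 1) else 0) := by
  classical
  obtain ⟨⟨⟨p, hpk⟩, ⟨l, hlk⟩⟩, hv⟩ := v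
  simp only at hv ⊢
  have hdec : ∀ u : GraphAVertex k, graphAAdj k ⟨(⟨p, hpk⟩, ⟨l, hlk⟩), hv⟩ u
        * G (u.1.1 : ℕ) (u.1.2 : ℕ)
      = (if (u.1.1 : ℕ) = p + 1 ∧ (u.1.2 : ℕ) = l then G (p + 1) l else 0)
        + (if 1 ≤ p then (if (u.1.1 : ℕ) = p - 1 ∧ (u.1.2 : ℕ) = l + 1
            then G (p - 1) (l + 1) else 0) else 0)
        + (if 1 ≤ l then (if (u.1.1 : ℕ) = p ∧ (u.1.2 : ℕ) = l - 1
            then G p (l - 1) else 0) else 0) := by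
    intro u
    obtain ⟨⟨⟨x, hx⟩, ⟨y, hy⟩⟩, hu⟩ := u
    unfold graphAAdj
    simp only
    by_cases c1 : (x = p + 1 ∧ y = l)
    · obtain ⟨h1, h2⟩ := c1
      subst h1; subst h2
      split_ifs <;> first | ring1 | (exfalso; omega)
    · by_cases c2 : (1 ≤ p ∧ x = p - 1 ∧ y = l + 1)
      · obtain ⟨hp1, h1, h2⟩ := c2
        subst h1; subst h2
        split_ifs <;> first | ring1 | (exfalso; omega)
      · by_cases c3 : (1 ≤ l ∧ x = p ∧ y = l - 1)
        · obtain ⟨hl1, h1, h2⟩ := c3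
          subst h1; subst h2
          split_ifs <;> first | ring1 | (exfalso; omega)
        · split_ifs <;> first | ring1 | (exfalso; omega)
  rw [Finset.sum_congr rfl (fun u _ => hdec u)]
  rw [Finset.sum_add_distrib, Finset.sum_add_distrib]
  congr 1
  · congr 1
    · by_cases h : p + 1 + l ≤ k
      · rw [sum_pt k (p+1) l h, if_pos (by omega)]
      · rw [sum_pt_zero k (p+1) l h, if_neg (by omega)]
    · by_cases h : 1 ≤ p
      · simp only [if_pos h]
        exact sum_pt k (p-1) (l+1) (by omega) _
      · simp only [if_neg h, Finset.sum_const_zero]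
  · by_cases h : 1 ≤ l
    · simp only [if_pos h]
      exact sum_pt k p (l-1) (by omega) _
    · simp only [if_neg h, Finset.sum_const_zero]

set_option maxHeartbeats 1000000 in
lemma adjT_sum (k : ℕ) (v : GraphAVertex k) (G : ℕ → ℕ → ℤ) :
    (∑ u : GraphAVertex k, graphAAdj k u v * G (u.1.1 : ℕ) (u.1.2 : ℕ))
      = (if 1 ≤ (v.1.1 : ℕ) then G ((v.1.1 : ℕ) - 1) (v.1.2 : ℕ) else 0)
        + (if 1 ≤ (v.1.2 : ℕ) then G ((v.1.1 : ℕ) + 1) ((v.1.2 : ℕ) - 1) else 0)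
        + (if (v.1.1 : ℕ) + (v.1.2 : ℕ) + 1 ≤ k then G (v.1.1 : ℕ) ((v.1.2 : ℕ) + 1) else 0) := by
  classical
  obtain ⟨⟨⟨p, hpk⟩, ⟨l, hlk⟩⟩, hv⟩ := v
  simp only at hv ⊢
  have hdec : ∀ u : GraphAVertex k, graphAAdj k u ⟨(⟨p, hpk⟩, ⟨l, hlk⟩), hv⟩
        * G (u.1.1 : ℕ) (u.1.2 : ℕ)
      = (if 1 ≤ p then (if (u.1.1 : ℕ) = p - 1 ∧ (u.1.2 : ℕ) = l
            then G (p - 1) l else 0) else 0)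
        + (if 1 ≤ l then (if (u.1.1 : ℕ) = p + 1 ∧ (u.1.2 : ℕ) = l - 1
            then G (p + 1) (l - 1) else 0) else 0)
        + (if (u.1.1 : ℕ) = p ∧ (u.1.2 : ℕ) = l + 1 then G p (l + 1) else 0) := by
    intro u
    obtain ⟨⟨⟨x, hx⟩, ⟨y, hy⟩⟩, hu⟩ := u
    unfold graphAAdj
    simp only
    by_cases c1 : (1 ≤ p ∧ x = p - 1 ∧ y = l)
    · obtain ⟨hp1, h1, h2⟩ := c1
      subst h1; subst h2
      split_ifs <;> first | ring1 | (exfalso; omega)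
    · by_cases c2 : (1 ≤ l ∧ x = p + 1 ∧ y = l - 1)
      · obtain ⟨hl1, h1, h2⟩ := c2
        subst h1; subst h2
        split_ifs <;> first | ring1 | (exfalso; omega)
      · by_cases c3 : (x = p ∧ y = l + 1)
        · obtain ⟨h1, h2⟩ := c3
          subst h1; subst h2
          split_ifs <;> first | ring1 | (exfalso; omega)
        · split_ifs <;> first | ring1 | (exfalso; omega)
  rw [Finset.sum_congr rfl (fun u _ => hdec u)]
  rw [Finset.sum_add_distrib, Finset.sum_add_distrib]
  congr 1
  · congr 1
    · by_cases h : 1 ≤ p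
      · simp only [if_pos h]
        exact sum_pt k (p-1) l (by omega) _
      · simp only [if_neg h, Finset.sum_const_zero]
    · by_cases h : 1 ≤ l
      · simp only [if_pos h]
        exact sum_pt k (p+1) (l-1) (by omega) _
      · simp only [if_neg h, Finset.sum_const_zero]
  · by_cases h : p + l + 1 ≤ k
    · rw [sum_pt k p (l+1) (by omega), if_pos h]
    · rw [sum_pt_zero k p (l+1) (by omega), if_neg h]

lemma adj_entry (k : ℕ) (v w : GraphAVertex k) :
    graphAAdj k v w
      = Fz k 1 (v.1.1 : ℕ) (v.1.2 : ℕ) (w.1.1 : ℕ) (w.1.2 : ℕ) := by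
  have hv := v.2
  have hw := w.2
  rw [P1z (k : ℤ) (v.1.1 : ℕ) (v.1.2 : ℕ) (w.1.1 : ℕ) (w.1.2 : ℕ)
    (by positivity) (by positivity) (by positivity) (by positivity)
    (by exact_mod_cast hv) (by exact_mod_cast hw)]
  unfold graphAAdj
  refine if_congr ?_ rfl rfl
  omega

lemma one_entry (k : ℕ) (v w : GraphAVertex k) :
    (1 : Matrix (GraphAVertex k) (GraphAVertex k) ℤ) v w
      = Fz k 0 (v.1.1 : ℕ) (v.1.2 : ℕ) (w.1.1 : ℕ) (w.1.2 : ℕ) := by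
  have hv := v.2
  have hw := w.2
  rw [P0z (k : ℤ) (v.1.1 : ℕ) (v.1.2 : ℕ) (w.1.1 : ℕ) (w.1.2 : ℕ)
    (by positivity) (by positivity) (by positivity) (by positivity)
    (by exact_mod_cast hv) (by exact_mod_cast hw), Matrix.one_apply]
  refine if_congr ?_ rfl rfl
  constructor
  · rintro rfl
    exact ⟨rfl, rfl⟩
  · rintro ⟨h1, h2⟩
    exact (Subtype.ext (Prod.ext (Fin.ext (by exact_mod_cast h1))
      (Fin.ext (by exact_mod_cast h2)))).symm

lemma stepN (k j p l q m : ℕ) (hpl : p + l ≤ k) (hqm : q + m ≤ k) (hjk : j + 3 ≤ k) :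
    ((if p + l + 1 ≤ k then Fz k (j+2) (↑(p+1)) l q m else 0)
      + (if 1 ≤ p then Fz k (j+2) (↑(p-1)) (↑(l+1)) q m else 0)
      + (if 1 ≤ l then Fz k (j+2) p (↑(l-1)) q m else 0))
    - ((if 1 ≤ p then Fz k (j+1) (↑(p-1)) l q m else 0)
      + (if 1 ≤ l then Fz k (j+1) (↑(p+1)) (↑(l-1)) q m else 0)
      + (if p + l + 1 ≤ k then Fz k (j+1) p (↑(l+1)) q m else 0))
    + Fz k j p l q m = Fz k (↑(j+3)) p l q m := by
  have h := Pstepz (k : ℤ) (j : ℤ) (p : ℕ) (l : ℕ) (q : ℕ) (m : ℕ)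
    (by positivity) (by positivity) (by positivity) (by positivity)
    (by exact_mod_cast hpl) (by exact_mod_cast hqm) (by omega) (by omega)
  by_cases h1 : p + l + 1 ≤ k <;> by_cases h2 : (1 ≤ p) <;> by_cases h3 : (1 ≤ l) <;>
  [ (simp only [if_pos (show ((p:ℤ) + l + 1 ≤ k) by omega), if_pos (show ((1:ℤ) ≤ p) by omega),
        if_pos (show ((1:ℤ) ≤ l) by omega)] at h;
     simp only [if_pos h1, if_pos h2, if_pos h3]);
    (simp only [if_pos (show ((p:ℤ) + l + 1 ≤ k) by omega), if_pos (show ((1:ℤ) ≤ p) by omega),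
        if_neg (show ¬((1:ℤ) ≤ l) by omega)] at h;
     simp only [if_pos h1, if_pos h2, if_neg h3]);
    (simp only [if_pos (show ((p:ℤ) + l + 1 ≤ k) by omega), if_neg (show ¬((1:ℤ) ≤ p) by omega),
        if_pos (show ((1:ℤ) ≤ l) by omega)] at h;
     simp only [if_pos h1, if_neg h2, if_pos h3]);
    (simp only [if_pos (show ((p:ℤ) + l + 1 ≤ k) by omega), if_neg (show ¬((1:ℤ) ≤ p) by omega),
        if_neg (show ¬((1:ℤ) ≤ l) by omega)] at h;
     simp only [if_pos h1, if_neg h2, if_neg h3]);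
    (simp only [if_neg (show ¬((p:ℤ) + l + 1 ≤ k) by omega), if_pos (show ((1:ℤ) ≤ p) by omega),
        if_pos (show ((1:ℤ) ≤ l) by omega)] at h;
     simp only [if_neg h1, if_pos h2, if_pos h3]);
    (simp only [if_neg (show ¬((p:ℤ) + l + 1 ≤ k) by omega), if_pos (show ((1:ℤ) ≤ p) by omega),
        if_neg (show ¬((1:ℤ) ≤ l) by omega)] at h;
     simp only [if_neg h1, if_pos h2, if_neg h3]);
    (simp only [if_neg (show ¬((p:ℤ) + l + 1 ≤ k) by omega), if_neg (show ¬((1:ℤ) ≤ p) by omega),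
        if_pos (show ((1:ℤ) ≤ l) by omega)] at h;
     simp only [if_neg h1, if_neg h2, if_pos h3]);
    (simp only [if_neg (show ¬((p:ℤ) + l + 1 ≤ k) by omega), if_neg (show ¬((1:ℤ) ≤ p) by omega),
        if_neg (show ¬((1:ℤ) ≤ l) by omega)] at h;
     simp only [if_neg h1, if_neg h2, if_neg h3])] <;>
  · push_cast
    try rw [show ((p - 1 : ℕ) : ℤ) = (p : ℤ) - 1 by omega]
    try rw [show ((l - 1 : ℕ) : ℤ) = (l : ℤ) - 1 by omega]
    linarith [h]

lemma step2N (k p l q m : ℕ) (hpl : p + l ≤ k) (hqm : q + m ≤ k) (hk2 : 2 ≤ k) :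
    ((if p + l + 1 ≤ k then Fz k 1 (↑(p+1)) l q m else 0)
      + (if 1 ≤ p then Fz k 1 (↑(p-1)) (↑(l+1)) q m else 0)
      + (if 1 ≤ l then Fz k 1 p (↑(l-1)) q m else 0))
    - ((if 1 ≤ p then Fz k 0 (↑(p-1)) l q m else 0)
      + (if 1 ≤ l then Fz k 0 (↑(p+1)) (↑(l-1)) q m else 0)
      + (if p + l + 1 ≤ k then Fz k 0 p (↑(l+1)) q m else 0))
    = Fz k (↑(2:ℕ)) p l q m := by
  have h := Pstepz (k : ℤ) (-1) (p : ℕ) (l : ℕ) (q : ℕ) (m : ℕ)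
    (by positivity) (by positivity) (by positivity) (by positivity)
    (by exact_mod_cast hpl) (by exact_mod_cast hqm) (by omega) (by omega)
  norm_num at h
  rw [Fz_jneg (k : ℤ) (-1) p l q m (by omega)] at h
  simp only [Int.lt_iff_add_one_le] at h
  by_cases h1 : p + l + 1 ≤ k <;> by_cases h2 : (1 ≤ p) <;> by_cases h3 : (1 ≤ l) <;>
  [ (simp only [if_pos h1, if_pos (show ((p:ℤ) + l + 1 ≤ k) by omega), if_pos h2, if_pos h3] at h ⊢);
    (simp only [if_pos h1, if_pos (show ((p:ℤ) + l + 1 ≤ k) by omega), if_pos h2, if_neg h3] at h ⊢);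
    (simp only [if_pos h1, if_pos (show ((p:ℤ) + l + 1 ≤ k) by omega), if_neg h2, if_pos h3] at h ⊢);
    (simp only [if_pos h1, if_pos (show ((p:ℤ) + l + 1 ≤ k) by omega), if_neg h2, if_neg h3] at h ⊢);
    (simp only [if_neg h1, if_neg (show ¬((p:ℤ) + l + 1 ≤ k) by omega), if_pos h2, if_pos h3] at h ⊢);
    (simp only [if_neg h1, if_neg (show ¬((p:ℤ) + l + 1 ≤ k) by omega), if_pos h2, if_neg h3] at h ⊢);
    (simp only [if_neg h1, if_neg (show ¬((p:ℤ) + l + 1 ≤ k) by omega), if_neg h2, if_pos h3] at h ⊢);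
    (simp only [if_neg h1, if_neg (show ¬((p:ℤ) + l + 1 ≤ k) by omega), if_neg h2, if_neg h3] at h ⊢)] <;>
  · push_cast
    try rw [show ((p - 1 : ℕ) : ℤ) = (p : ℤ) - 1 by omega]
    try rw [show ((l - 1 : ℕ) : ℤ) = (l : ℤ) - 1 by omega]
    linarith [h]

set_option maxHeartbeats 1000000 in
lemma mainN (k : ℕ) : ∀ j, j ≤ k → ∀ v w : GraphAVertex k,
    graphAFusion k j v w
      = Fz k j (v.1.1 : ℕ) (v.1.2 : ℕ) (w.1.1 : ℕ) (w.1.2 : ℕ) := by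
  intro j
  induction j using Nat.strong_induction_on with
  | _ j ih =>
    obtain _ | _ | _ | n := j
    · intro _ v w
      rw [show graphAFusion k 0 = (1 : Matrix (GraphAVertex k) (GraphAVertex k) ℤ) from rfl,
        one_entry]
      norm_num
    · intro _ v w
      rw [show graphAFusion k 1 = graphAAdj k from rfl, adj_entry]
      norm_num
    · intro hk2 v w
      show (graphAAdj k * graphAAdj k - (graphAAdj k)ᵀ) v w = _
      rw [show (graphAAdj k)ᵀ = (graphAAdj k)ᵀ * (1 : Matrix (GraphAVertex k)
        (GraphAVertex k) ℤ) from (Matrix.mul_one _).symm]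
      rw [Matrix.sub_apply, Matrix.mul_apply, Matrix.mul_apply]
      simp only [Matrix.transpose_apply]
      have e1 : (∑ u : GraphAVertex k, graphAAdj k v u * graphAAdj k u w)
          = ∑ u : GraphAVertex k, graphAAdj k v u
            * Fz k 1 (u.1.1 : ℕ) (u.1.2 : ℕ) (w.1.1 : ℕ) (w.1.2 : ℕ) :=
        Finset.sum_congr rfl (fun u _ => by rw [adj_entry k u w])
      have e0 : (∑ u : GraphAVertex k, graphAAdj k u v
            * (1 : Matrix (GraphAVertex k) (GraphAVertex k) ℤ) u w)
          = ∑ u : GraphAVertex k, graphAAdj k u v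
            * Fz k 0 (u.1.1 : ℕ) (u.1.2 : ℕ) (w.1.1 : ℕ) (w.1.2 : ℕ) :=
        Finset.sum_congr rfl (fun u _ => by rw [one_entry k u w])
      rw [e1, e0]
      have hs1 := adj_sum k v (fun a b => Fz k 1 a b (w.1.1 : ℕ) (w.1.2 : ℕ))
      have hs0 := adjT_sum k v (fun a b => Fz k 0 a b (w.1.1 : ℕ) (w.1.2 : ℕ))
      beta_reduce at hs1 hs0
      rw [hs1, hs0]
      have h2 := step2N k (v.1.1 : ℕ) (v.1.2 : ℕ) (w.1.1 : ℕ) (w.1.2 : ℕ) v.2 w.2 hk2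
      push_cast at h2 ⊢
      linarith [h2]
    · intro hjk v w
      show (graphAAdj k * graphAFusion k (n + 2) - (graphAAdj k)ᵀ * graphAFusion k (n + 1)
        + graphAFusion k n) v w = _
      rw [Matrix.add_apply, Matrix.sub_apply, Matrix.mul_apply, Matrix.mul_apply]
      simp only [Matrix.transpose_apply]
      have e2 : (∑ u : GraphAVertex k, graphAAdj k v u * graphAFusion k (n + 2) u w)
          = ∑ u : GraphAVertex k, graphAAdj k v u
            * Fz k (↑(n+2) : ℤ) (u.1.1 : ℕ) (u.1.2 : ℕ) (w.1.1 : ℕ) (w.1.2 : ℕ) :=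
        Finset.sum_congr rfl (fun u _ => by rw [ih (n+2) (by omega) (by omega) u w])
      have e1 : (∑ u : GraphAVertex k, graphAAdj k u v * graphAFusion k (n + 1) u w)
          = ∑ u : GraphAVertex k, graphAAdj k u v
            * Fz k (↑(n+1) : ℤ) (u.1.1 : ℕ) (u.1.2 : ℕ) (w.1.1 : ℕ) (w.1.2 : ℕ) :=
        Finset.sum_congr rfl (fun u _ => by rw [ih (n+1) (by omega) (by omega) u w])
      rw [e2, e1, ih n (by omega) (by omega) v w]
      have hs2 := adj_sum k v (fun a b => Fz k (↑(n+2) : ℤ) a b (w.1.1 : ℕ) (w.1.2 : ℕ))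
      have hs1 := adjT_sum k v (fun a b => Fz k (↑(n+1) : ℤ) a b (w.1.1 : ℕ) (w.1.2 : ℕ))
      beta_reduce at hs2 hs1
      rw [hs2, hs1]
      have h := stepN k n (v.1.1 : ℕ) (v.1.2 : ℕ) (w.1.1 : ℕ) (w.1.2 : ℕ) v.2 w.2 hjk
      push_cast at h ⊢
      rw [show ((n:ℤ) + 1 + 1 + 1) = ((n:ℤ) + 3) from by ring]
      linarith [h]

/-- **The permutation `P` of the Hilbert series theorem for `𝒜⁽ⁿ⁾` is the `ℤ₃` rotation**:
the fusion matrix `N_k` is the permutation matrix of `σ(p,l) = (k−p−l, p)`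
(i.e. `N_k(v,w) = 1` if `w = σ(v)` and `0` otherwise); moreover `σ` is a bijection with
`σ∘σ∘σ = id` and `σ ≠ id` (so `σ` has order 3), and `σ` is an automorphism of the graph:
`Δ(σ(v),σ(w)) = Δ(v,w)` for all vertices `v, w`. -/
theorem graphAFusion_top_isPermMatrix (k : ℕ) (hk : 1 ≤ k) :
    (∀ v w : GraphAVertex k,
        graphAFusion k k v w = if w = graphASigma k v then 1 else 0) ∧
    Function.Bijective (graphASigma k) ∧
    (∀ v : GraphAVertex k, graphASigma k (graphASigma k (graphASigma k v)) = v) ∧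
    graphASigma k ≠ id ∧
    (∀ v w : GraphAVertex k,
        graphAAdj k (graphASigma k v) (graphASigma k w) = graphAAdj k v w) := by
  have hsigma3 : ∀ v : GraphAVertex k,
      graphASigma k (graphASigma k (graphASigma k v)) = v := by
    intro v
    have hv := v.2
    refine Subtype.ext (Prod.ext (Fin.ext ?_) (Fin.ext ?_)) <;>
      simp only [graphASigma] <;> omega
  refine ⟨?_, ?_, hsigma3, ?_, ?_⟩
  · intro v w
    have hv := v.2
    have hw := w.2
    rw [mainN k k le_rfl v w,
      Ptopz (k : ℤ) (v.1.1 : ℕ) (v.1.2 : ℕ) (w.1.1 : ℕ) (w.1.2 : ℕ)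
        (by positivity) (by positivity) (by positivity) (by positivity)
        (by exact_mod_cast hv) (by exact_mod_cast hw)]
    refine if_congr ?_ rfl rfl
    constructor
    · intro h
      refine Subtype.ext (Prod.ext (Fin.ext ?_) (Fin.ext ?_)) <;>
        simp only [graphASigma] <;> omega
    · rintro rfl
      simp only [graphASigma]
      constructor <;> push_cast <;> omega
  · exact Function.bijective_iff_has_inverse.mpr
      ⟨fun v => graphASigma k (graphASigma k v), fun v => hsigma3 v, fun v => hsigma3 v⟩
  · intro heq
    have h0 : (0 : ℕ) < k + 1 := by omega
    have hv0 : ((⟨(⟨0, h0⟩, ⟨0, h0⟩), by simp⟩ : GraphAVertex k) : GraphAVertex k) ∈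
      Set.univ := Set.mem_univ _
    have := congrFun heq ⟨(⟨0, h0⟩, ⟨0, h0⟩), by simp⟩
    have hc := congrArg (fun x : GraphAVertex k => (x.1.1 : ℕ)) this
    simp only [graphASigma, id] at hc
    omega
  · intro v w
    have hv := v.2
    have hw := w.2
    unfold graphAAdj
    refine if_congr ?_ rfl rfl
    simp only [graphASigma]
    omega
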